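/- In the real fusion algebra A_ℝ := ℝ ⊗_ℤ A, the regular element R := Σ_{i∈I} d_i b_i satisfies b_j · R = d_j · R and R · b_j = d_j · R for every j ∈ I. Consequently, for every finite-dimensional *-representation ρ : A_ℂ → End(V) on a complex inner product space V (i.e. ρ(b_{i*}) = ρ(b_i)† for all i) and every v ∈ V, one has Σ_{i∈I} d_i · ⟨ρ(b_i)v, v⟩ ≥ 0 (the sum is a nonnegative real number). -/

import Mathlib

open scoped BigOperators

/-- A fusion ring datum: finite index set `I`, unit index `zero`, duality involution `dual`,
and structure constants `N` satisfying associativity, unit, duality and symmetry axioms. -/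
structure FusionData (I : Type*) [Fintype I] [DecidableEq I] where
  zero : I
  dual : I → I
  N : I → I → I → ℕ
  dual_dual : ∀ i, dual (dual i) = i
  dual_zero : dual zero = zero
  assoc : ∀ i j k l, ∑ m, N i j m * N m k l = ∑ m, N j k m * N i m l
  unit_left : ∀ j m, N zero j m = if j = m then 1 else 0
  unit_right : ∀ i m, N i zero m = if i = m then 1 else 0
  duality : ∀ i j, N i j zero = if j = dual i then 1 else 0
  sym1 : ∀ i j m, N i j m = N j (dual m) (dual i)
  sym2 : ∀ i j m, N i j m = N (dual m) i (dual j)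
  sym3 : ∀ i j m, N i j m = N (dual j) (dual i) (dual m)

/-- A family `d : I → ℝ` of Frobenius–Perron dimensions for a fusion datum. -/
structure FusionData.IsFPdim {I : Type*} [Fintype I] [DecidableEq I]
    (F : FusionData I) (d : I → ℝ) : Prop where
  pos : ∀ i, 0 < d i
  one : d F.zero = 1
  dual : ∀ i, d (F.dual i) = d i
  mul : ∀ i j, d i * d j = ∑ m, (F.N i j m : ℝ) * d m

section Aux
variable {I : Type*} [Fintype I] [DecidableEq I] (F : FusionData I) {d : I → ℝ}

lemma fd_key1 (hd : F.IsFPdim d) (j m : I) :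
    ∑ i, (F.N j i m : ℝ) * d i = d j * d m := by
  have h : ∀ i, F.N j i m = F.N (F.dual j) m i := by
    intro i
    rw [F.sym2 j i m, F.sym3 (F.dual m) j (F.dual i), F.dual_dual, F.dual_dual]
  calc ∑ i, (F.N j i m : ℝ) * d i = ∑ i, (F.N (F.dual j) m i : ℝ) * d i := by
        simp_rw [h]
    _ = d (F.dual j) * d m := (hd.mul _ _).symm
    _ = d j * d m := by rw [hd.dual]

lemma fd_key2 (hd : F.IsFPdim d) (j m : I) :
    ∑ i, (F.N i j m : ℝ) * d i = d j * d m := by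
  have h : ∀ i, F.N i j m = F.N j (F.dual m) (F.dual i) := fun i => F.sym1 i j m
  have e : ∑ i, (F.N j (F.dual m) (F.dual i) : ℝ) * d i
      = ∑ i, (F.N j (F.dual m) i : ℝ) * d i :=
    Fintype.sum_equiv (Function.Involutive.toPerm F.dual F.dual_dual) _ _
      (fun i => by simp [Function.Involutive.toPerm, hd.dual])
  simp_rw [h]
  rw [e, ← hd.mul, hd.dual]

lemma fd_reg_mul {S : Type*} [CommRing S] (φ : ℝ →+* S)
    {A : Type*} [Ring A] [Algebra S A] (b : Module.Basis I S A)
    (hbmul : ∀ i j, b i * b j = ∑ m, (F.N i j m : S) • b m)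
    (hd : F.IsFPdim d) (j : I) :
    b j * (∑ i, φ (d i) • b i) = φ (d j) • (∑ i, φ (d i) • b i) ∧
    (∑ i, φ (d i) • b i) * b j = φ (d j) • (∑ i, φ (d i) • b i) := by
  have coeff1 : ∀ m, ∑ i, φ (d i) * (F.N j i m : S) = φ (d j) * φ (d m) := by
    intro m
    calc ∑ i, φ (d i) * (F.N j i m : S) = φ (∑ i, (F.N j i m : ℝ) * d i) := by
          rw [map_sum]
          exact Finset.sum_congr rfl fun i _ => by rw [map_mul, map_natCast, mul_comm]
      _ = φ (d j * d m) := by rw [fd_key1 F hd]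
      _ = φ (d j) * φ (d m) := map_mul _ _ _
  have coeff2 : ∀ m, ∑ i, φ (d i) * (F.N i j m : S) = φ (d j) * φ (d m) := by
    intro m
    calc ∑ i, φ (d i) * (F.N i j m : S) = φ (∑ i, (F.N i j m : ℝ) * d i) := by
          rw [map_sum]
          exact Finset.sum_congr rfl fun i _ => by rw [map_mul, map_natCast, mul_comm]
      _ = φ (d j * d m) := by rw [fd_key2 F hd]
      _ = φ (d j) * φ (d m) := map_mul _ _ _
  constructor
  · rw [Finset.mul_sum, Finset.smul_sum]
    simp_rw [mul_smul_comm, hbmul, Finset.smul_sum, smul_smul]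
    rw [Finset.sum_comm]
    exact Finset.sum_congr rfl fun m _ => by rw [← Finset.sum_smul, coeff1]
  · rw [Finset.sum_mul, Finset.smul_sum]
    simp_rw [smul_mul_assoc, hbmul, Finset.smul_sum, smul_smul]
    rw [Finset.sum_comm]
    exact Finset.sum_congr rfl fun m _ => by rw [← Finset.sum_smul, coeff2]

end Aux

open scoped ComplexOrder in
/-- In the real fusion algebra `Aℝ`, the regular element `R = ∑ i, d i • bR i` satisfies
`bR j * R = d j • R` and `R * bR j = d j • R`; consequently, for every finite-dimensional
*-representation `ρ` of the complexified fusion ring on a complex inner product space and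
every vector `v`, the sum `∑ i, d i * ⟨ρ (b i) v, v⟩` is a nonnegative real number. -/
theorem regular_element_and_positivity {I : Type*} [Fintype I] [DecidableEq I]
    (F : FusionData I) (d : I → ℝ) (hd : F.IsFPdim d)
    -- the real fusion algebra `Aℝ = ℝ ⊗ A`
    {Aℝ : Type*} [Ring Aℝ] [Algebra ℝ Aℝ] (bR : Module.Basis I ℝ Aℝ)
    (hbR1 : bR F.zero = 1)
    (hbRmul : ∀ i j, bR i * bR j = ∑ m, (F.N i j m : ℝ) • bR m)
    -- the complexified fusion ring `A = ℂ ⊗ A`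
    {A : Type*} [Ring A] [Algebra ℂ A] (b : Module.Basis I ℂ A)
    (hb1 : b F.zero = 1)
    (hbmul : ∀ i j, b i * b j = ∑ m, (F.N i j m : ℂ) • b m)
    {V : Type*} [NormedAddCommGroup V] [InnerProductSpace ℂ V] [FiniteDimensional ℂ V]
    (ρ : A →ₐ[ℂ] Module.End ℂ V)
    -- `ρ` is a *-representation: `ρ (b i*) = (ρ (b i))†`
    (hstar : ∀ i, ρ (b (F.dual i)) = LinearMap.adjoint (ρ (b i)))
    (v : V) :
    (∀ j, bR j * (∑ i, d i • bR i) = d j • (∑ i, d i • bR i)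
        ∧ (∑ i, d i • bR i) * bR j = d j • (∑ i, d i • bR i))
    ∧ 0 ≤ ∑ i, (d i : ℂ) * (inner ℂ (ρ (b i) v) v : ℂ) := by
  constructor
  · intro j
    simpa using fd_reg_mul F (RingHom.id ℝ) bR hbRmul hd j
  · -- complex regular element
    set Rc : A := ∑ i, (d i : ℂ) • b i with hRc
    have hreg : ∀ j, b j * Rc = (d j : ℂ) • Rc := by
      intro j
      exact (fd_reg_mul F Complex.ofRealHom b hbmul hd j).1
    set T : Module.End ℂ V := ρ Rc with hT
    have hTsum : T = ∑ i, (d i : ℂ) • ρ (b i) := by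
      rw [hT, hRc, map_sum]
      exact Finset.sum_congr rfl fun i _ => map_smul ρ _ _
    -- self-adjointness
    have hsa : LinearMap.adjoint T = T := by
      rw [hTsum, map_sum]
      simp_rw [map_smulₛₗ, ← hstar, Complex.conj_ofReal]
      exact Fintype.sum_equiv (Function.Involutive.toPerm F.dual F.dual_dual) _ _
        (fun i => by simp [Function.Involutive.toPerm, hd.dual])
    -- T^2 = D • T
    set D : ℝ := ∑ i, d i ^ 2 with hD
    have hDpos : 0 < D := by
      have : Nonempty I := ⟨F.zero⟩
      exact Finset.sum_pos (fun i _ => pow_pos (hd.pos i) 2) Finset.univ_nonempty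
    have hT2 : T * T = (D : ℂ) • T := by
      have : Rc * Rc = (D : ℂ) • Rc := by
        rw [hRc]
        nth_rewrite 1 [Finset.sum_mul]
        simp_rw [smul_mul_assoc, ← hRc, hreg, smul_smul, ← Finset.sum_smul]
        congr 1
        push_cast [hD]
        ring_nf
      rw [hT, ← map_mul, this, map_smul]
    -- the sum equals ⟨T v, v⟩
    have hsum : ∑ i, (d i : ℂ) * (inner ℂ (ρ (b i) v) v : ℂ) = (inner ℂ (T v) v : ℂ) := by
      rw [hTsum]
      simp only [LinearMap.sum_apply, LinearMap.smul_apply, sum_inner, inner_smul_left,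
        Complex.conj_ofReal]
    rw [hsum]
    have key : (D : ℂ) * (inner ℂ (T v) v : ℂ) = (inner ℂ (T v) (T v) : ℂ) := by
      calc (D : ℂ) * (inner ℂ (T v) v : ℂ) = inner ℂ ((D : ℂ) • (T v)) v := by
            rw [inner_smul_left, Complex.conj_ofReal]
        _ = inner ℂ (T (T v)) v := by
            congr 1
            have := congrArg (fun f : Module.End ℂ V => f v) hT2
            simpa [Module.End.mul_apply] using this.symm
        _ = inner ℂ (T v) (T v) := by
            nth_rewrite 1 [← hsa]
            exact LinearMap.adjoint_inner_left _ _ _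
    have h0 : (0 : ℂ) ≤ (inner ℂ (T v) (T v) : ℂ) := by
      rw [Complex.le_def]
      constructor
      · exact inner_self_nonneg (𝕜 := ℂ) (x := T v)
      · exact (inner_self_im (𝕜 := ℂ) (T v)).symm
    have hinner : (inner ℂ (T v) v : ℂ) = ((D : ℂ))⁻¹ * (inner ℂ (T v) (T v) : ℂ) := by
      rw [← key, ← mul_assoc, inv_mul_cancel₀ (by exact_mod_cast hDpos.ne'), one_mul]
    rw [hinner]
    refine mul_nonneg ?_ h0
    rw [← Complex.ofReal_inv]
    exact_mod_cast inv_nonneg.mpr hDpos.le
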